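/- Let h ≥ r be positive integers and 0 < β < 1. Then there exists α > 0 depending only on h, r, β such that for every graph G on n vertices with p = p_r(G), for all i ∈ [h] and r ≤ j ≤ h: ∑_{S ∈ A_{i,j}} |N(S)|^r ≥ (1−β) n^{j+r} p^{jr}, where A_{i,j} is the set of i-good sequences of length j relative to (α, β, h, r). In particular, there is an i-good sequence S of length j with |N(S)| ≥ (1−β)^{1/r} p^j n. -/

import Mathlib

/-- The common neighborhood of a sequence of vertices. -/
def commNbhd {V : Type} (G : SimpleGraph V) {j : ℕ} (S : Fin j → V) : Set V :=
  {v | ∀ a : Fin j, G.Adj (S a) v}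

/-- The `r`-norm density `p_r(G) := ((∑_v d(v)^r)/n^{r+1})^{1/r}`. -/
noncomputable def rnormDensity {V : Type} [Fintype V] (G : SimpleGraph V)
    [DecidableRel G.Adj] (r : ℕ) : ℝ :=
  ((∑ v : V, (G.degree v : ℝ) ^ r) / (Fintype.card V : ℝ) ^ (r + 1)) ^ ((r : ℝ)⁻¹)

/-- `IsGood G α β p h i j S` : the length-`j` vertex sequence `S` is `i`-good relative
to `(α, β, h, r)` in `G`, where `p = p_r(G)`. A sequence `T` is `0`-good if
`|N(T)| ≥ α p^{|T|} n`; for `i ≥ 1`, `S` is `i`-good if it is `0`-good and for every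
`|S| ≤ k ≤ h`, at least `(1-β)|N(S)|^k` of the length-`k` sequences in `N(S)` are
`(i-1)`-good. -/
def IsGood {V : Type} [Fintype V] (G : SimpleGraph V) (α β p : ℝ) (h : ℕ) :
    ℕ → (j : ℕ) → (Fin j → V) → Prop
  | 0, j, S => α * p ^ j * (Fintype.card V : ℝ) ≤ (Nat.card (commNbhd G S) : ℝ)
  | i + 1, j, S =>
      (α * p ^ j * (Fintype.card V : ℝ) ≤ (Nat.card (commNbhd G S) : ℝ)) ∧
      ∀ k : ℕ, j ≤ k → k ≤ h →
        (1 - β) * (Nat.card (commNbhd G S) : ℝ) ^ k ≤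
          (Nat.card {T : Fin k → V // (∀ a, T a ∈ commNbhd G S) ∧ IsGood G α β p h i k T} : ℝ)

open scoped Classical
open Finset

section Aux
variable {V : Type} [Fintype V] (G : SimpleGraph V)

/-- The common neighborhood as a finset. -/
noncomputable def nfin {j : ℕ} (S : Fin j → V) : Finset V :=
  Finset.univ.filter (fun v => ∀ a, G.Adj (S a) v)

lemma mem_nfin {j : ℕ} {S : Fin j → V} {v : V} : v ∈ nfin G S ↔ ∀ a, G.Adj (S a) v := by
  simp [nfin]

lemma natCard_commNbhd {j : ℕ} (S : Fin j → V) :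
    Nat.card (commNbhd G S) = (nfin G S).card := by
  have h1 : commNbhd G S = ↑(nfin G S) := by
    ext v; simp [commNbhd, nfin]
  rw [h1, Nat.card_coe_set_eq, Set.ncard_coe_finset]

lemma card_filter_pi (s : Finset V) (k : ℕ) :
    (Finset.univ.filter (fun T : Fin k → V => ∀ a, T a ∈ s)).card = s.card ^ k := by
  classical
  rw [← Fintype.card_subtype]
  rw [Fintype.card_congr (Equiv.subtypePiEquivPi (p := fun _ x => x ∈ s))]
  simp [Fintype.card_pi]

lemma natCard_subtype_filter {j k : ℕ} (S : Fin j → V) (P : (Fin k → V) → Prop) :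
    Nat.card {T : Fin k → V // (∀ a, T a ∈ commNbhd G S) ∧ P T}
      = (Finset.univ.filter (fun T : Fin k → V => (∀ a, T a ∈ nfin G S) ∧ P T)).card := by
  rw [Nat.card_eq_fintype_card, Fintype.card_subtype]
  apply Finset.card_bij (fun T _ => T) <;> intros <;>
    simp only [Finset.mem_filter, Finset.mem_univ, true_and] at * <;>
    simp_all [mem_nfin, commNbhd, Set.mem_setOf_eq]

end Aux

section Aux2
variable {V : Type} [Fintype V] (G : SimpleGraph V)
open Finset

lemma nfin_swap {j k : ℕ} (S : Fin j → V) (T : Fin k → V) :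
    (∀ a, T a ∈ nfin G S) ↔ (∀ b, S b ∈ nfin G T) := by
  simp only [mem_nfin]
  exact ⟨fun hh b a => (hh a b).symm, fun hh a b => (hh b a).symm⟩

lemma swap_sum {j k : ℕ} (P : (Fin k → V) → Prop) :
    ∑ S : Fin j → V,
        (Finset.univ.filter (fun T : Fin k → V => (∀ a, T a ∈ nfin G S) ∧ P T)).card
      = ∑ T : Fin k → V, if P T then (nfin G T).card ^ j else 0 := by
  simp only [Finset.card_filter]
  rw [Finset.sum_comm]
  refine Finset.sum_congr rfl fun T _ => ?_
  by_cases hP : P T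
  · simp only [hP, and_true, if_true]
    have h1 : ∀ S : Fin j → V, (if (∀ a, T a ∈ nfin G S) then 1 else 0)
        = (if (∀ b, S b ∈ nfin G T) then 1 else 0) := by
      intro S; exact if_congr (nfin_swap G S T) rfl rfl
    rw [Finset.sum_congr rfl (fun S _ => h1 S), ← Finset.card_filter,
      card_filter_pi]
  · simp [hP]

lemma sum_pow_swap {j m : ℕ} :
    ∑ S : Fin j → V, (nfin G S).card ^ m = ∑ T : Fin m → V, (nfin G T).card ^ j := by
  have h0 := swap_sum (V := V) G (j := j) (k := m) (fun _ => True)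
  simp only [and_true, if_true] at h0
  calc ∑ S : Fin j → V, (nfin G S).card ^ m
      = ∑ S : Fin j → V,
          (Finset.univ.filter (fun T : Fin m → V => ∀ a, T a ∈ nfin G S)).card :=
        Finset.sum_congr rfl fun S _ => (card_filter_pi _ _).symm
    _ = ∑ T : Fin m → V, (nfin G T).card ^ j := h0

lemma sum_nfin_deg [DecidableRel G.Adj] (r : ℕ) :
    ∑ T : Fin r → V, (nfin G T).card = ∑ v : V, G.degree v ^ r := by
  have h1 : ∀ T : Fin r → V, (nfin G T).card = ∑ v : V, if v ∈ nfin G T then 1 else 0 := by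
    intro T
    rw [← Finset.card_filter]
    congr 1
    simp
  rw [Finset.sum_congr rfl fun T _ => h1 T, Finset.sum_comm]
  refine Finset.sum_congr rfl fun v _ => ?_
  rw [← Finset.card_filter]
  have h2 : (Finset.univ.filter (fun T : Fin r → V => v ∈ nfin G T))
      = (Finset.univ.filter (fun T : Fin r → V => ∀ a, T a ∈ G.neighborFinset v)) := by
    apply Finset.filter_congr; intro T _
    simp [mem_nfin, SimpleGraph.mem_neighborFinset, SimpleGraph.adj_comm]
  rw [h2, card_filter_pi]
  simp

end Aux2

section Aux3
open Finset Real
variable {V : Type} [Fintype V] [Nonempty V] (G : SimpleGraph V) [DecidableRel G.Adj]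

lemma rnorm_nonneg (r : ℕ) : 0 ≤ rnormDensity G r :=
  Real.rpow_nonneg (div_nonneg (Finset.sum_nonneg fun v _ => by positivity) (by positivity)) _

lemma rnorm_pow {r : ℕ} (hr : 1 ≤ r) :
    rnormDensity G r ^ r * (Fintype.card V : ℝ) ^ (r + 1)
      = ∑ v : V, (G.degree v : ℝ) ^ r := by
  have hn : (0:ℝ) < (Fintype.card V : ℝ) := by
    exact_mod_cast Fintype.card_pos
  have hX : (0:ℝ) ≤ (∑ v : V, (G.degree v : ℝ) ^ r) / (Fintype.card V : ℝ) ^ (r + 1) :=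
    div_nonneg (Finset.sum_nonneg fun v _ => by positivity) (by positivity)
  rw [rnormDensity, Real.rpow_inv_natCast_pow hX (by omega),
    div_mul_cancel₀ _ (by positivity)]

lemma rnorm_le_one {r : ℕ} (hr : 1 ≤ r) : rnormDensity G r ≤ 1 := by
  have hn : (0:ℝ) < (Fintype.card V : ℝ) := by exact_mod_cast Fintype.card_pos
  apply Real.rpow_le_one _ _ (by positivity)
  · exact div_nonneg (Finset.sum_nonneg fun v _ => by positivity) (by positivity)
  · rw [div_le_one (by positivity), pow_succ, mul_comm]
    calc (∑ v : V, (G.degree v : ℝ) ^ r) ≤ ∑ _v : V, (Fintype.card V : ℝ) ^ r :=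
          Finset.sum_le_sum fun v _ => by
            have : (G.degree v : ℝ) ≤ (Fintype.card V : ℝ) := by
              exact_mod_cast (G.neighborFinset v).card_le_univ
            exact pow_le_pow_left₀ (by positivity) this r
      _ = (Fintype.card V : ℝ) * (Fintype.card V : ℝ) ^ r := by
          rw [Finset.sum_const, Finset.card_univ, nsmul_eq_mul]

/-- total-sum lower bound -/
lemma total_lower {r j : ℕ} (hr : 1 ≤ r) (hj : 1 ≤ j) :
    rnormDensity G r ^ (j * r) * (Fintype.card V : ℝ) ^ (j + r)
      ≤ ∑ S : Fin j → V, ((nfin G S).card : ℝ) ^ r := by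
  set p := rnormDensity G r with hp
  set n : ℝ := (Fintype.card V : ℝ) with hndef
  have hn : (0:ℝ) < n := by rw [hndef]; exact_mod_cast Fintype.card_pos
  have hp0 : 0 ≤ p := rnorm_nonneg G r
  -- rewrite sum as over T : Fin r → V
  have hswap : ∑ S : Fin j → V, ((nfin G S).card : ℝ) ^ r
      = ∑ T : Fin r → V, ((nfin G T).card : ℝ) ^ j := by
    have := sum_pow_swap (V := V) G (j := j) (m := r)
    exact_mod_cast congrArg (Nat.cast : ℕ → ℝ) this
  rw [hswap]
  -- Jensen
  obtain ⟨j', rfl⟩ : ∃ j', j = j' + 1 := ⟨j - 1, by omega⟩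
  have hJ := pow_sum_div_card_le_sum_pow
    (s := (Finset.univ : Finset (Fin r → V))) (f := fun T => ((nfin G T).card : ℝ))
    (fun T _ => by positivity) j'
  have hcard : ((Finset.univ : Finset (Fin r → V)).card : ℝ) = n ^ r := by
    simp [hndef]
  rw [hcard] at hJ
  refine le_trans ?_ hJ
  have hA : ∑ T : Fin r → V, ((nfin G T).card : ℝ) = p ^ r * n ^ (r + 1) := by
    rw [rnorm_pow G hr]
    have := sum_nfin_deg G r
    exact_mod_cast congrArg (Nat.cast : ℕ → ℝ) this
  rw [hA]
  rw [le_div_iff₀ (by positivity)]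
  have hexp : (r + 1) * (j' + 1) = ((j' + 1) + r) + r * j' := by ring
  refine le_of_eq ?_
  calc p ^ ((j' + 1) * r) * n ^ ((j' + 1) + r) * (n ^ r) ^ j'
      = p ^ (r * (j' + 1)) * n ^ ((r + 1) * (j' + 1)) := by
        rw [hexp]; ring
    _ = (p ^ r * n ^ (r + 1)) ^ (j' + 1) := by rw [mul_pow, ← pow_mul, ← pow_mul]
end Aux3

/-- Hölder-type estimate. -/
lemma holder_sum {ι : Type*} (s : Finset ι) (f : ι → ℝ) (hf : ∀ i ∈ s, 0 ≤ f i)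
    {θ : ℝ} (hθ0 : 0 < θ) (hθ1 : θ ≤ 1) :
    ∑ i ∈ s, f i ^ θ ≤ (s.card : ℝ) ^ (1 - θ) * (∑ i ∈ s, f i) ^ θ := by
  rcases s.eq_empty_or_nonempty with rfl | hs
  · simp
    positivity
  have hM : (0:ℝ) < s.card := by exact_mod_cast hs.card_pos
  have key := Real.arith_mean_le_rpow_mean s (fun _ => (s.card : ℝ)⁻¹)
    (fun i => f i ^ θ) (fun i _ => by positivity)
    (by rw [Finset.sum_const, nsmul_eq_mul, mul_inv_cancel₀ hM.ne'])
    (fun i hi => Real.rpow_nonneg (hf i hi) θ) (p := θ⁻¹) ((one_le_inv₀ hθ0).mpr hθ1)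
  simp only [one_div, inv_inv] at key
  have hrw : ∀ i ∈ s, (s.card : ℝ)⁻¹ * (f i ^ θ) ^ θ⁻¹ = (s.card : ℝ)⁻¹ * f i := by
    intro i hi
    rw [Real.rpow_rpow_inv (hf i hi) hθ0.ne']
  rw [Finset.sum_congr rfl hrw, ← Finset.mul_sum, ← Finset.mul_sum,
    Real.mul_rpow (by positivity) (Finset.sum_nonneg hf)] at key
  have h2 : ∑ i ∈ s, f i ^ θ ≤ (s.card : ℝ) * (((s.card : ℝ)⁻¹) ^ θ * (∑ i ∈ s, f i) ^ θ) := by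
    calc ∑ i ∈ s, f i ^ θ = (s.card : ℝ) * ((s.card:ℝ)⁻¹ * ∑ i ∈ s, f i ^ θ) := by
          field_simp
      _ ≤ (s.card : ℝ) * (((s.card : ℝ)⁻¹) ^ θ * (∑ i ∈ s, f i) ^ θ) := by
          refine mul_le_mul_of_nonneg_left key hM.le
  refine h2.trans (le_of_eq ?_)
  rw [← mul_assoc]
  congr 1
  rw [Real.rpow_sub hM, Real.rpow_one, Real.inv_rpow hM.le, div_eq_mul_inv]

section Aux4
variable {V : Type} [Fintype V] (G : SimpleGraph V)

lemma isGood_zero_iff (α β p : ℝ) (h j : ℕ) (S : Fin j → V) :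
    IsGood G α β p h 0 j S ↔
      α * p ^ j * (Fintype.card V : ℝ) ≤ ((nfin G S).card : ℝ) := by
  rw [IsGood, natCard_commNbhd]

lemma isGood_succ_iff (α β p : ℝ) (h i j : ℕ) (S : Fin j → V) :
    IsGood G α β p h (i+1) j S ↔
      (α * p ^ j * (Fintype.card V : ℝ) ≤ ((nfin G S).card : ℝ)) ∧
      ∀ k : ℕ, j ≤ k → k ≤ h →
        (1 - β) * ((nfin G S).card : ℝ) ^ k ≤
          (Nat.card {T : Fin k → V // (∀ a, T a ∈ commNbhd G S) ∧ IsGood G α β p h i k T} : ℝ) := by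
  rw [IsGood, natCard_commNbhd]

lemma gzero_bound [Nonempty V] (α p : ℝ) (hα0 : 0 ≤ α) (hα1 : α ≤ 1) (hp0 : 0 ≤ p)
    (j m : ℕ) (hm : 1 ≤ m) :
    ∑ S : Fin j → V,
        (if ¬ (α * p ^ j * (Fintype.card V : ℝ) ≤ ((nfin G S).card : ℝ)) then
          ((nfin G S).card : ℝ) ^ m else 0)
      ≤ α * p ^ (j * m) * (Fintype.card V : ℝ) ^ (j + m) := by
  set n : ℝ := (Fintype.card V : ℝ) with hndef
  have hn : (0:ℝ) < n := by rw [hndef]; exact_mod_cast Fintype.card_pos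
  have hb : (0:ℝ) ≤ α * p ^ j * n := by positivity
  have hpt : ∀ S : Fin j → V,
      (if ¬ (α * p ^ j * n ≤ ((nfin G S).card : ℝ)) then ((nfin G S).card : ℝ) ^ m else 0)
        ≤ (α * p ^ j * n) ^ m := by
    intro S
    by_cases hc : α * p ^ j * n ≤ ((nfin G S).card : ℝ)
    · simp only [hc, not_true, if_neg, if_false]
      · positivity
    · simp only [hc, not_false_iff, if_true]
      exact pow_le_pow_left₀ (by positivity) (le_of_not_ge hc) m
  calc ∑ S : Fin j → V,
        (if ¬ (α * p ^ j * n ≤ ((nfin G S).card : ℝ)) then ((nfin G S).card : ℝ) ^ m else 0)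
      ≤ ∑ _S : Fin j → V, (α * p ^ j * n) ^ m := Finset.sum_le_sum fun S _ => hpt S
    _ = n ^ j * (α * p ^ j * n) ^ m := by
        rw [Finset.sum_const, Finset.card_univ, nsmul_eq_mul]
        congr 1
        simp [hndef]
    _ = α ^ m * (p ^ (j * m) * n ^ (j + m)) := by
        rw [mul_pow, mul_pow, ← pow_mul, pow_add]
        ring
    _ ≤ α * (p ^ (j * m) * n ^ (j + m)) := by
        refine mul_le_mul_of_nonneg_right ?_ (by positivity)
        calc α ^ m ≤ α ^ 1 := pow_le_pow_of_le_one hα0 hα1 hm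
          _ = α := pow_one α
    _ = α * p ^ (j * m) * n ^ (j + m) := by ring

end Aux4

section Arith
open Real

variable {β D γ α : ℝ} {h : ℕ}

lemma consts_facts (hβ0 : 0 < β) (hβ1 : β < 1) (hh : 1 ≤ h)
    (hD : D = 1 + (h+1)/β) (hγ : γ = β/(2*D^(h+1))) (hα : α = γ^(h^h)) :
    1 ≤ D ∧ 0 < γ ∧ γ ≤ 1 ∧ 0 < α ∧ α ≤ 1 := by
  have hD1 : 1 ≤ D := by rw [hD]; nlinarith [div_nonneg (by positivity : (0:ℝ) ≤ (h:ℝ)+1) hβ0.le]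
  have hDp : (1:ℝ) ≤ D^(h+1) := one_le_pow₀ hD1
  have hγ0 : 0 < γ := by rw [hγ]; positivity
  have hγ1 : γ ≤ 1 := by
    rw [hγ]
    rw [div_le_one (by positivity)]
    nlinarith
  refine ⟨hD1, hγ0, hγ1, by rw [hα]; positivity, ?_⟩
  rw [hα]
  exact pow_le_one₀ hγ0.le hγ1

lemma eps_le (hβ0 : 0 < β) (hβ1 : β < 1) (hh : 1 ≤ h)
    (hD : D = 1 + (h+1)/β) (hγ : γ = β/(2*D^(h+1))) (hα : α = γ^(h^h))
    {i : ℕ} (hi : i ≤ h) :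
    D^(i+1) * γ^(h^(h-i)) ≤ β/2 := by
  obtain ⟨hD1, hγ0, hγ1, -, -⟩ := consts_facts hβ0 hβ1 hh hD hγ hα
  have h1 : D^(i+1) ≤ D^(h+1) := pow_le_pow_right₀ hD1 (by omega)
  have h2 : γ^(h^(h-i)) ≤ γ^1 := pow_le_pow_of_le_one hγ0.le hγ1
    (Nat.one_le_pow _ _ (by omega))
  have h3 : D^(i+1) * γ^(h^(h-i)) ≤ D^(h+1) * γ := by
    apply mul_le_mul h1 (by simpa using h2) (by positivity) (by positivity)
  refine h3.trans (le_of_eq ?_)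
  rw [hγ]
  have : D^(h+1) ≠ 0 := by positivity
  field_simp

lemma eps_rpow_le (hβ0 : 0 < β) (hβ1 : β < 1) (hh : 1 ≤ h)
    (hD : D = 1 + (h+1)/β) (hγ : γ = β/(2*D^(h+1))) (hα : α = γ^(h^h))
    {i : ℕ} (hi : i + 1 ≤ h) {θ : ℝ} (hθh : ((h:ℝ))⁻¹ ≤ θ) (hθ1 : θ ≤ 1) :
    ((D^(i+1) * γ^(h^(h-i)))/β) ^ θ ≤ (D^(i+1)/β) * γ^(h^(h-i-1)) := by
  obtain ⟨hD1, hγ0, hγ1, -, -⟩ := consts_facts hβ0 hβ1 hh hD hγ hα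
  set x : ℝ := (D^(i+1) * γ^(h^(h-i)))/β with hx
  set R : ℝ := (D^(i+1)/β) * γ^(h^(h-i-1)) with hR
  have hx0 : 0 < x := by rw [hx]; positivity
  have hx1 : x ≤ 1 := by
    rw [hx, div_le_one hβ0]
    exact (eps_le hβ0 hβ1 hh hD hγ hα (by omega)).trans (by linarith)
  have hR0 : 0 ≤ R := by rw [hR]; positivity
  have hbase : (1:ℝ) ≤ D^(i+1)/β := by
    rw [le_div_iff₀ hβ0]; nlinarith [one_le_pow₀ hD1 (n := i+1)]
  have hxR : x ≤ R^h := by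
    rw [hx, hR, mul_pow, ← pow_mul]
    have hexp : h^(h-i-1) * h = h^(h-i) := by
      rw [← pow_succ]
      congr 1
      omega
    rw [hexp, div_eq_mul_inv, div_eq_mul_inv]
    have h4 : D^(i+1) * β⁻¹ ≤ (D^(i+1) * β⁻¹)^h := le_self_pow₀ (by
      rw [← div_eq_mul_inv]; exact hbase) (by omega)
    calc D^(i+1) * γ^(h^(h-i)) * β⁻¹ = (D^(i+1) * β⁻¹) * γ^(h^(h-i)) := by ring
      _ ≤ (D^(i+1) * β⁻¹)^h * γ^(h^(h-i)) := mul_le_mul_of_nonneg_right h4 (by positivity)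
  calc x ^ θ ≤ x ^ ((h:ℝ))⁻¹ := Real.rpow_le_rpow_of_exponent_ge hx0 hx1 hθh
    _ ≤ (R^h) ^ ((h:ℝ))⁻¹ := Real.rpow_le_rpow hx0.le hxR (by positivity)
    _ = R := Real.pow_rpow_inv_natCast hR0 (by omega)

lemma step_calc {β p n Ei : ℝ} {k j m : ℕ} (hβ0 : 0 < β) (hp0 : 0 ≤ p) (hn : 0 < n)
    (hE0 : 0 ≤ Ei) (hk0 : 0 < k) :
    (1/β)^((m:ℝ)/k) * (((n:ℝ)^j)^(1-(m:ℝ)/k) * (Ei * p^(k*j) * n^(k+j))^((m:ℝ)/k))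
      = (Ei/β)^((m:ℝ)/k) * p^(j*m) * n^(j+m) := by
  set θ : ℝ := (m:ℝ)/k with hθ
  have hkR : (k:ℝ) ≠ 0 := by positivity
  have hkθ : (k:ℝ) * θ = m := by rw [hθ]; field_simp
  have h1 : (Ei * p^(k*j) * n^(k+j))^θ = Ei^θ * (p^(k*j))^θ * (n^(k+j))^θ := by
    rw [Real.mul_rpow (by positivity) (by positivity),
      Real.mul_rpow hE0 (by positivity)]
  have h2 : (p^(k*j))^θ = p^(j*m) := by
    rw [← Real.rpow_natCast p (k*j), ← Real.rpow_mul hp0, ← Real.rpow_natCast p (j*m)]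
    congr 1
    push_cast
    rw [mul_comm (k:ℝ) (j:ℝ), mul_assoc, hkθ]
  have h3 : ((n:ℝ)^j)^(1-θ) * (n^(k+j))^θ = n^(j+m) := by
    rw [← Real.rpow_natCast n j, ← Real.rpow_natCast n (k+j), ← Real.rpow_natCast n (j+m),
      ← Real.rpow_mul hn.le, ← Real.rpow_mul hn.le, ← Real.rpow_add hn]
    congr 1
    push_cast
    nlinarith [hkθ]
  have h4 : (1/β)^θ * Ei^θ = (Ei/β)^θ := by
    rw [← Real.mul_rpow (by positivity) hE0, one_div, inv_mul_eq_div]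
  calc (1/β)^θ * (((n:ℝ)^j)^(1-θ) * (Ei * p^(k*j) * n^(k+j))^θ)
      = ((1/β)^θ * Ei^θ) * (p^(k*j))^θ * (((n:ℝ)^j)^(1-θ) * (n^(k+j))^θ) := by
        rw [h1]; ring
    _ = (Ei/β)^θ * p^(j*m) * n^(j+m) := by rw [h2, h3, h4]

end Arith

section Main
open Finset Real

variable {V : Type} [Fintype V] [Nonempty V] (G : SimpleGraph V) [DecidableRel G.Adj]

set_option maxHeartbeats 1000000 in
lemma bad_bound (h r : ℕ) (hr : 1 ≤ r) (hrh : r ≤ h) (β D γ α : ℝ)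
    (hβ0 : 0 < β) (hβ1 : β < 1)
    (hD : D = 1 + (h+1)/β) (hγ : γ = β/(2*D^(h+1))) (hα : α = γ^(h^h)) :
    ∀ i, i ≤ h → ∀ j m : ℕ, r ≤ j → j ≤ h → 1 ≤ m → m ≤ j →
      ∑ S : Fin j → V, (if ¬ IsGood G α β (rnormDensity G r) h i j S
          then ((nfin G S).card : ℝ) ^ m else 0)
        ≤ D^(i+1) * γ^(h^(h-i)) * rnormDensity G r ^ (j*m) * (Fintype.card V : ℝ) ^ (j+m) := by
  have hh1 : 1 ≤ h := le_trans hr hrh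
  obtain ⟨hD1, hγ0, hγ1, hα0, hα1⟩ := consts_facts hβ0 hβ1 hh1 hD hγ hα
  set p := rnormDensity G r with hpdef
  have hp0 : 0 ≤ p := rnorm_nonneg G r
  set n : ℝ := (Fintype.card V : ℝ) with hndef
  have hn : (0:ℝ) < n := by rw [hndef]; exact_mod_cast Fintype.card_pos
  intro i
  induction i with
  | zero =>
      intro _ j m hrj hjh hm1 hmj
      have hb := gzero_bound G α p hα0.le hα1 hp0 j m hm1
      have hrw : ∀ S : Fin j → V,
          (if ¬ IsGood G α β p h 0 j S then ((nfin G S).card : ℝ) ^ m else 0)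
            = (if ¬ (α * p ^ j * n ≤ ((nfin G S).card : ℝ))
                then ((nfin G S).card : ℝ) ^ m else 0) := fun S =>
        if_congr (not_congr (isGood_zero_iff G α β p h j S)) rfl rfl
      rw [Finset.sum_congr rfl fun S _ => hrw S]
      refine hb.trans ?_
      have hcoef : α ≤ D^(0+1) * γ^(h^(h-0)) := by
        rw [hα, pow_one]
        simp only [Nat.sub_zero]
        nlinarith [pow_pos hγ0 (h^h), hD1]
      exact mul_le_mul_of_nonneg_right
        (mul_le_mul_of_nonneg_right hcoef (by positivity)) (by positivity)
  | succ i ih =>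
      intro hi1 j m hrj hjh hm1 hmj
      have hIH := ih (by omega)
      have hj1 : 1 ≤ j := le_trans hr hrj
      -- pointwise split of the bad indicator
      have hNS0 : ∀ S : Fin j → V, (0:ℝ) ≤ ((nfin G S).card : ℝ) := fun S => by positivity
      have hsplit : ∀ S : Fin j → V,
          (if ¬ IsGood G α β p h (i+1) j S then ((nfin G S).card : ℝ) ^ m else 0)
            ≤ (if ¬ (α * p ^ j * n ≤ ((nfin G S).card : ℝ))
                then ((nfin G S).card : ℝ) ^ m else 0)
              + ∑ k ∈ Finset.Icc j h,
                  (if ¬ ((1-β) * ((nfin G S).card : ℝ) ^ k ≤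
                      (Nat.card {T : Fin k → V // (∀ a, T a ∈ commNbhd G S) ∧
                        IsGood G α β p h i k T} : ℝ))
                    then ((nfin G S).card : ℝ) ^ m else 0) := by
        intro S
        have hterm0 : ∀ (c : Prop) [Decidable c],
            (0:ℝ) ≤ (if c then ((nfin G S).card : ℝ) ^ m else 0) := by
          intro c _; split_ifs <;> positivity
        by_cases hg : IsGood G α β p h (i+1) j S
        · rw [if_neg (not_not_intro hg)]
          exact add_nonneg (hterm0 _) (Finset.sum_nonneg fun k _ => hterm0 _)
        · rw [if_pos hg]
          rw [isGood_succ_iff] at hg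
          by_cases hA : α * p ^ j * n ≤ ((nfin G S).card : ℝ)
          · have hB : ¬ ∀ k : ℕ, j ≤ k → k ≤ h →
                (1 - β) * ((nfin G S).card : ℝ) ^ k ≤
                  (Nat.card {T : Fin k → V // (∀ a, T a ∈ commNbhd G S) ∧
                    IsGood G α β p h i k T} : ℝ) := fun hB => hg ⟨hA, hB⟩
            push_neg at hB
            obtain ⟨k, hk1, hk2, hklt⟩ := hB
            have hmem : k ∈ Finset.Icc j h := Finset.mem_Icc.mpr ⟨hk1, hk2⟩
            have hsel : ((nfin G S).card : ℝ) ^ m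
                ≤ ∑ k ∈ Finset.Icc j h,
                    (if ¬ ((1-β) * ((nfin G S).card : ℝ) ^ k ≤
                        (Nat.card {T : Fin k → V // (∀ a, T a ∈ commNbhd G S) ∧
                          IsGood G α β p h i k T} : ℝ))
                      then ((nfin G S).card : ℝ) ^ m else 0) := by
              refine le_trans (le_of_eq ?_) (Finset.single_le_sum (fun k _ => hterm0 _) hmem)
              rw [if_pos (not_le.mpr hklt)]
            calc ((nfin G S).card : ℝ) ^ m
                ≤ 0 + ((nfin G S).card : ℝ) ^ m := by rw [zero_add]
              _ ≤ _ := add_le_add (hterm0 _) hsel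
          · rw [if_pos hA]
            exact le_add_of_nonneg_right (Finset.sum_nonneg fun k _ => hterm0 _)
      -- per-k bound
      have hkbound : ∀ k ∈ Finset.Icc j h,
          ∑ S : Fin j → V,
              (if ¬ ((1-β) * ((nfin G S).card : ℝ) ^ k ≤
                  (Nat.card {T : Fin k → V // (∀ a, T a ∈ commNbhd G S) ∧
                    IsGood G α β p h i k T} : ℝ))
                then ((nfin G S).card : ℝ) ^ m else 0)
            ≤ (D^(i+1)/β) * γ^(h^(h-i-1)) * p ^ (j*m) * n ^ (j+m) := by
        intro k hk
        obtain ⟨hk1, hk2⟩ := Finset.mem_Icc.mp hk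
        have hk0 : 0 < k := lt_of_lt_of_le (by omega : 0 < j) hk1
        have hkR : (0:ℝ) < (k:ℝ) := by exact_mod_cast hk0
        set θ : ℝ := (m:ℝ)/(k:ℝ) with hθdef
        have hθ0 : 0 < θ := div_pos (by exact_mod_cast hm1) hkR
        have hθ1 : θ ≤ 1 := by
          rw [hθdef, div_le_one hkR]
          exact_mod_cast le_trans hmj hk1
        have hθh : ((h:ℝ))⁻¹ ≤ θ := by
          have h6 : (k:ℝ) ≤ (h:ℝ) := by exact_mod_cast hk2
          have h5 : (1:ℝ) ≤ (m:ℝ) := by exact_mod_cast hm1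
          calc ((h:ℝ))⁻¹ = 1/(h:ℝ) := by rw [one_div]
            _ ≤ 1/(k:ℝ) := one_div_le_one_div_of_le hkR h6
            _ ≤ (m:ℝ)/(k:ℝ) := by gcongr
        -- pointwise bound via the bad-tuples count
        have hpt : ∀ S : Fin j → V,
            (if ¬ ((1-β) * ((nfin G S).card : ℝ) ^ k ≤
                (Nat.card {T : Fin k → V // (∀ a, T a ∈ commNbhd G S) ∧
                  IsGood G α β p h i k T} : ℝ))
              then ((nfin G S).card : ℝ) ^ m else 0)
            ≤ (1/β)^θ * (((Finset.univ.filter (fun T : Fin k → V =>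
                (∀ a, T a ∈ nfin G S) ∧ ¬ IsGood G α β p h i k T)).card : ℝ))^θ := by
          intro S
          by_cases hf : (1-β) * ((nfin G S).card : ℝ) ^ k ≤
              (Nat.card {T : Fin k → V // (∀ a, T a ∈ commNbhd G S) ∧
                IsGood G α β p h i k T} : ℝ)
          · rw [if_neg (not_not_intro hf)]
            positivity
          · rw [if_pos hf]
            set BR : ℝ := ((Finset.univ.filter (fun T : Fin k → V =>
                (∀ a, T a ∈ nfin G S) ∧ ¬ IsGood G α β p h i k T)).card : ℝ) with hBRdef
            have hBR0 : 0 ≤ BR := by rw [hBRdef]; positivity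
            have e1 : Nat.card {T : Fin k → V // (∀ a, T a ∈ commNbhd G S) ∧
                IsGood G α β p h i k T}
              = (Finset.univ.filter (fun T : Fin k → V =>
                (∀ a, T a ∈ nfin G S) ∧ IsGood G α β p h i k T)).card :=
              natCard_subtype_filter G S _
            have e2 : (Finset.univ.filter (fun T : Fin k → V =>
                  (∀ a, T a ∈ nfin G S) ∧ IsGood G α β p h i k T)).card
                + (Finset.univ.filter (fun T : Fin k → V =>
                  (∀ a, T a ∈ nfin G S) ∧ ¬ IsGood G α β p h i k T)).card
                = (nfin G S).card ^ k := by
              rw [← Finset.filter_filter, ← Finset.filter_filter,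
                Finset.card_filter_add_card_filter_not, card_filter_pi]
            have hcnt : ((Finset.univ.filter (fun T : Fin k → V =>
                  (∀ a, T a ∈ nfin G S) ∧ IsGood G α β p h i k T)).card : ℝ) + BR
                = ((nfin G S).card : ℝ) ^ k := by
              rw [hBRdef]; exact_mod_cast e2
            have hfail : ((Finset.univ.filter (fun T : Fin k → V =>
                  (∀ a, T a ∈ nfin G S) ∧ IsGood G α β p h i k T)).card : ℝ)
                < (1-β) * ((nfin G S).card : ℝ) ^ k := by
              rw [← e1] at *
              exact_mod_cast not_le.mp hf
            have hβN : β * ((nfin G S).card : ℝ) ^ k ≤ BR := by linarith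
            have hNk : ((nfin G S).card : ℝ) ^ k ≤ BR / β :=
              (le_div_iff₀ hβ0).mpr (by linarith)
            have hNm : ((nfin G S).card : ℝ) ^ m = (((nfin G S).card : ℝ) ^ k) ^ θ := by
              rw [← Real.rpow_natCast ((nfin G S).card : ℝ) k, ← Real.rpow_mul (hNS0 S),
                show (k:ℝ) * θ = (m:ℝ) by rw [hθdef]; field_simp, Real.rpow_natCast]
            rw [hNm]
            calc (((nfin G S).card : ℝ) ^ k) ^ θ ≤ (BR/β) ^ θ :=
                Real.rpow_le_rpow (by positivity) hNk hθ0.le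
              _ = (1/β)^θ * BR^θ := by
                  rw [show BR/β = (1/β)*BR by ring, Real.mul_rpow (by positivity) hBR0]
        -- sum the pointwise bound and apply Hölder + induction hypothesis
        have hBsum : ∑ S : Fin j → V, ((Finset.univ.filter (fun T : Fin k → V =>
              (∀ a, T a ∈ nfin G S) ∧ ¬ IsGood G α β p h i k T)).card : ℝ)
            = ∑ T : Fin k → V,
                (if ¬ IsGood G α β p h i k T then ((nfin G T).card : ℝ) ^ j else 0) := by
          have h8 := swap_sum (V := V) G (j := j) (k := k)
            (fun T => ¬ IsGood G α β p h i k T)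
          have h9 := congrArg (fun z : ℕ => (z : ℝ)) h8
          push_cast at h9
          convert h9 using 3
          congr!
          congr 1
          ext T
          simp
        have hIHk := hIH k j (le_trans hrj hk1) hk2 hj1 hk1
        have hsumBR : ∑ S : Fin j → V, ((Finset.univ.filter (fun T : Fin k → V =>
              (∀ a, T a ∈ nfin G S) ∧ ¬ IsGood G α β p h i k T)).card : ℝ)
            ≤ D^(i+1) * γ^(h^(h-i)) * p ^ (k*j) * n ^ (k+j) := by
          rw [hBsum]; exact hIHk
        have holder := holder_sum (Finset.univ : Finset (Fin j → V))
          (fun S => ((Finset.univ.filter (fun T : Fin k → V =>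
            (∀ a, T a ∈ nfin G S) ∧ ¬ IsGood G α β p h i k T)).card : ℝ))
          (fun S _ => by positivity) hθ0 hθ1
        have hcard : (((Finset.univ : Finset (Fin j → V))).card : ℝ) = n ^ j := by
          simp [hndef]
        calc ∑ S : Fin j → V,
              (if ¬ ((1-β) * ((nfin G S).card : ℝ) ^ k ≤
                  (Nat.card {T : Fin k → V // (∀ a, T a ∈ commNbhd G S) ∧
                    IsGood G α β p h i k T} : ℝ))
                then ((nfin G S).card : ℝ) ^ m else 0)
            ≤ ∑ S : Fin j → V, (1/β)^θ * (((Finset.univ.filter (fun T : Fin k → V =>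
                (∀ a, T a ∈ nfin G S) ∧ ¬ IsGood G α β p h i k T)).card : ℝ))^θ :=
              Finset.sum_le_sum fun S _ => hpt S
          _ = (1/β)^θ * ∑ S : Fin j → V, (((Finset.univ.filter (fun T : Fin k → V =>
                (∀ a, T a ∈ nfin G S) ∧ ¬ IsGood G α β p h i k T)).card : ℝ))^θ := by
              rw [Finset.mul_sum]
          _ ≤ (1/β)^θ * ((n^j)^(1-θ) *
                ((D^(i+1) * γ^(h^(h-i)) * p ^ (k*j) * n ^ (k+j)))^θ) := by
              refine mul_le_mul_of_nonneg_left (holder.trans ?_) (by positivity)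
              rw [hcard]
              refine mul_le_mul_of_nonneg_left ?_ (by positivity)
              exact Real.rpow_le_rpow (Finset.sum_nonneg fun S _ => by positivity)
                hsumBR hθ0.le
          _ = ((D^(i+1) * γ^(h^(h-i)))/β)^θ * p ^ (j*m) * n ^ (j+m) := by
              have := step_calc (β := β) (p := p) (n := n)
                (Ei := D^(i+1) * γ^(h^(h-i))) (k := k) (j := j) (m := m)
                hβ0 hp0 hn (by positivity) hk0
              rw [hθdef]
              convert this using 4 <;> ring
          _ ≤ (D^(i+1)/β) * γ^(h^(h-i-1)) * p ^ (j*m) * n ^ (j+m) := by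
              refine mul_le_mul_of_nonneg_right
                (mul_le_mul_of_nonneg_right ?_ (by positivity)) (by positivity)
              exact eps_rpow_le hβ0 hβ1 hh1 hD hγ hα (by omega) hθh hθ1
      -- assemble
      have hsub : h - (i+1) = h - i - 1 := by omega
      have hγle : α ≤ γ^(h^(h-i-1)) := by
        rw [hα]
        exact pow_le_pow_of_le_one hγ0.le hγ1 (Nat.pow_le_pow_right (by omega) (by omega))
      have h12 : (1:ℝ) ≤ D^(i+1) := one_le_pow₀ hD1
      have hcoef : α + (h:ℝ) * ((D^(i+1)/β) * γ^(h^(h-i-1)))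
          ≤ D^(i+2) * γ^(h^(h-i-1)) := by
        have hγp : (0:ℝ) < γ^(h^(h-i-1)) := by positivity
        have hkey : 1 + (h:ℝ) * (D^(i+1)/β) ≤ D^(i+2) := by
          have hexp2 : D^(i+2) = D^(i+1) + D^(i+1)*((h:ℝ)+1)/β := by
            rw [pow_succ, hD]; ring
          have hexp3 : D^(i+1)*((h:ℝ)+1)/β = (h:ℝ)*(D^(i+1)/β) + D^(i+1)/β := by ring
          have h11 : (0:ℝ) < D^(i+1)/β := by positivity
          linarith
        calc α + (h:ℝ) * ((D^(i+1)/β) * γ^(h^(h-i-1)))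
            = α + ((h:ℝ) * (D^(i+1)/β)) * γ^(h^(h-i-1)) := by ring
          _ ≤ 1*γ^(h^(h-i-1)) + ((h:ℝ)*(D^(i+1)/β))*γ^(h^(h-i-1)) := by
              refine add_le_add_left ?_ _
              rw [one_mul]
              exact hγle
          _ = (1 + (h:ℝ)*(D^(i+1)/β)) * γ^(h^(h-i-1)) := by ring
          _ ≤ D^(i+2) * γ^(h^(h-i-1)) := mul_le_mul_of_nonneg_right hkey hγp.le
      calc ∑ S : Fin j → V, (if ¬ IsGood G α β p h (i+1) j S
              then ((nfin G S).card : ℝ) ^ m else 0)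
          ≤ ∑ S : Fin j → V,
              ((if ¬ (α * p ^ j * n ≤ ((nfin G S).card : ℝ))
                  then ((nfin G S).card : ℝ) ^ m else 0)
                + ∑ k ∈ Finset.Icc j h,
                    (if ¬ ((1-β) * ((nfin G S).card : ℝ) ^ k ≤
                        (Nat.card {T : Fin k → V // (∀ a, T a ∈ commNbhd G S) ∧
                          IsGood G α β p h i k T} : ℝ))
                      then ((nfin G S).card : ℝ) ^ m else 0)) :=
            Finset.sum_le_sum fun S _ => hsplit S
        _ = (∑ S : Fin j → V,
              (if ¬ (α * p ^ j * n ≤ ((nfin G S).card : ℝ))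
                  then ((nfin G S).card : ℝ) ^ m else 0))
            + ∑ k ∈ Finset.Icc j h, ∑ S : Fin j → V,
                (if ¬ ((1-β) * ((nfin G S).card : ℝ) ^ k ≤
                    (Nat.card {T : Fin k → V // (∀ a, T a ∈ commNbhd G S) ∧
                      IsGood G α β p h i k T} : ℝ))
                  then ((nfin G S).card : ℝ) ^ m else 0) := by
            rw [Finset.sum_add_distrib, Finset.sum_comm]
        _ ≤ α * p ^ (j*m) * n ^ (j+m)
            + ∑ _k ∈ Finset.Icc j h,
                (D^(i+1)/β) * γ^(h^(h-i-1)) * p ^ (j*m) * n ^ (j+m) :=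
            add_le_add (gzero_bound G α p hα0.le hα1 hp0 j m hm1)
              (Finset.sum_le_sum hkbound)
        _ ≤ α * p ^ (j*m) * n ^ (j+m)
            + (h:ℝ) * ((D^(i+1)/β) * γ^(h^(h-i-1)) * p ^ (j*m) * n ^ (j+m)) := by
            rw [Finset.sum_const, Nat.card_Icc, nsmul_eq_mul]
            refine add_le_add_right (mul_le_mul_of_nonneg_right ?_ (by positivity)) _
            exact_mod_cast (by omega : h + 1 - j ≤ h)
        _ ≤ D^(i+1+1) * γ^(h^(h-(i+1))) * p ^ (j*m) * n ^ (j+m) := by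
            rw [hsub]
            calc α * p ^ (j*m) * n ^ (j+m)
                  + (h:ℝ) * ((D^(i+1)/β) * γ^(h^(h-i-1)) * p ^ (j*m) * n ^ (j+m))
                = (α + (h:ℝ) * ((D^(i+1)/β) * γ^(h^(h-i-1)))) * (p ^ (j*m) * n ^ (j+m)) := by
                  ring
              _ ≤ (D^(i+2) * γ^(h^(h-i-1))) * (p ^ (j*m) * n ^ (j+m)) :=
                  mul_le_mul_of_nonneg_right hcoef (by positivity)
              _ = D^(i+1+1) * γ^(h^(h-i-1)) * p ^ (j*m) * n ^ (j+m) := by ring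

end Main

section Final
open Finset Real

variable {V : Type} [Fintype V] [Nonempty V] (G : SimpleGraph V) [DecidableRel G.Adj]

lemma commNbhd_empty_of_p_zero {r : ℕ} (hr : 1 ≤ r) (hp : rnormDensity G r = 0)
    {j : ℕ} (hj : 1 ≤ j) (S : Fin j → V) : Nat.card (commNbhd G S) = 0 := by
  have hsum := rnorm_pow G hr
  rw [hp, zero_pow (by omega), zero_mul] at hsum
  have hdeg : ∀ v : V, (G.degree v : ℝ) ^ r = 0 := by
    intro v
    exact (Finset.sum_eq_zero_iff_of_nonneg (fun v _ => by positivity)).mp hsum.symm v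
      (Finset.mem_univ v)
  have hdeg0 : ∀ v, G.degree v = 0 := by
    intro v
    have h2 := pow_eq_zero_iff (by omega : r ≠ 0) |>.mp (hdeg v)
    exact_mod_cast h2
  have hcomm : commNbhd G S = ∅ := by
    ext v
    simp only [commNbhd, Set.mem_setOf_eq, Set.mem_empty_iff_false, iff_false]
    intro hv
    have hadj := hv ⟨0, by omega⟩
    have hmem : v ∈ G.neighborFinset (S ⟨0, by omega⟩) := by
      rw [SimpleGraph.mem_neighborFinset]; exact hadj
    have hd := hdeg0 (S ⟨0, by omega⟩)
    rw [← SimpleGraph.card_neighborFinset_eq_degree, Finset.card_eq_zero] at hd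
    simp [hd] at hmem
  rw [hcomm]
  simp

lemma allGood_of_p_zero {h r : ℕ} (hr : 1 ≤ r) (α β : ℝ) (hα0 : 0 ≤ α)
    (hp : rnormDensity G r = 0) :
    ∀ i {j : ℕ}, 1 ≤ j → ∀ S : Fin j → V, IsGood G α β (rnormDensity G r) h i j S := by
  intro i
  induction i with
  | zero =>
      intro j hj S
      rw [IsGood, hp, zero_pow (by omega), mul_zero, zero_mul]
      positivity
  | succ i ihg =>
      intro j hj S
      rw [IsGood]
      constructor
      · rw [hp, zero_pow (by omega), mul_zero, zero_mul]
        positivity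
      · intro k hk1 hk2
        rw [commNbhd_empty_of_p_zero G hr hp hj S, Nat.cast_zero,
          zero_pow (by omega : k ≠ 0), mul_zero]
        positivity

end Final

open scoped Classical in
/-- **Theorem 3.2 (nested goodness lemma).** For `h ≥ r ≥ 1` and `0 < β < 1` there is
`α > 0` such that for every graph `G` on `n` vertices, with `p = p_r(G)`, for all
`i ∈ [h]` and `r ≤ j ≤ h`, the sum of `|N(S)|^r` over `i`-good length-`j` sequences
is at least `(1-β) n^{j+r} p^{jr}`; in particular some `i`-good sequence `S` of
length `j` has `|N(S)| ≥ (1-β)^{1/r} p^j n`. -/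
theorem nested_goodness (h r : ℕ) (hr : 1 ≤ r) (hrh : r ≤ h) (β : ℝ) (hβ0 : 0 < β)
    (hβ1 : β < 1) :
    ∃ α : ℝ, 0 < α ∧
      ∀ (V : Type) [Fintype V] [Nonempty V] (G : SimpleGraph V) [DecidableRel G.Adj],
        ∀ i j : ℕ, 1 ≤ i → i ≤ h → r ≤ j → j ≤ h →
          ((1 - β) * (Fintype.card V : ℝ) ^ (j + r) * rnormDensity G r ^ (j * r) ≤
            ∑ S : Fin j → V,
              (if IsGood G α β (rnormDensity G r) h i j S then
                (Nat.card (commNbhd G S) : ℝ) ^ r else 0)) ∧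
          ∃ S : Fin j → V, IsGood G α β (rnormDensity G r) h i j S ∧
            (1 - β) ^ ((r : ℝ)⁻¹) * rnormDensity G r ^ j * (Fintype.card V : ℝ) ≤
              (Nat.card (commNbhd G S) : ℝ) := by
  set D : ℝ := 1 + (h+1)/β with hD
  set γ : ℝ := β/(2*D^(h+1)) with hγ
  set α : ℝ := γ^(h^h) with hα
  obtain ⟨hD1, hγ0, hγ1, hα0, hα1⟩ := consts_facts hβ0 hβ1 (le_trans hr hrh) hD hγ hα
  refine ⟨α, hα0, ?_⟩
  intro V _inst _ne G _dec i j hi1 hih hrj hjh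
  set p := rnormDensity G r with hpdef
  set n : ℝ := (Fintype.card V : ℝ) with hndef
  have hn : (0:ℝ) < n := by rw [hndef]; exact_mod_cast Fintype.card_pos
  have hp0 : 0 ≤ p := rnorm_nonneg G r
  have hj1 : 1 ≤ j := le_trans hr hrj
  have hβ2 : (0:ℝ) < 1 - β := by linarith
  -- rewrite the sums in terms of `nfin`
  have hNrw : ∀ S : Fin j → V, (Nat.card (commNbhd G S) : ℝ) = ((nfin G S).card : ℝ) :=
    fun S => by rw [natCard_commNbhd]
  have hbad := bad_bound G h r hr hrh β D γ α hβ0 hβ1 hD hγ hα i hih j r hrj hjh hr hrj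
  have htot := total_lower G hr hj1
  have heps : D^(i+1) * γ^(h^(h-i)) ≤ β :=
    (eps_le hβ0 hβ1 (le_trans hr hrh) hD hγ hα hih).trans (by linarith)
  have hX0 : (0:ℝ) ≤ p ^ (j*r) * n ^ (j+r) := by positivity
  have hbad' : ∑ S : Fin j → V,
      (if ¬ IsGood G α β p h i j S then ((nfin G S).card : ℝ) ^ r else 0)
        ≤ β * (p ^ (j*r) * n ^ (j+r)) := by
    refine hbad.trans ?_
    calc D^(i+1) * γ^(h^(h-i)) * p ^ (j*r) * n ^ (j+r)
        = (D^(i+1) * γ^(h^(h-i))) * (p ^ (j*r) * n ^ (j+r)) := by ring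
      _ ≤ β * (p ^ (j*r) * n ^ (j+r)) := mul_le_mul_of_nonneg_right heps hX0
  have hgood : (1 - β) * n ^ (j + r) * p ^ (j * r)
      ≤ ∑ S : Fin j → V,
          (if IsGood G α β p h i j S then ((nfin G S).card : ℝ) ^ r else 0) := by
    have hdecomp : ∀ S : Fin j → V,
        (if IsGood G α β p h i j S then ((nfin G S).card : ℝ) ^ r else 0)
          = ((nfin G S).card : ℝ) ^ r
            - (if ¬ IsGood G α β p h i j S then ((nfin G S).card : ℝ) ^ r else 0) := by
      intro S
      by_cases hg : IsGood G α β p h i j S <;> simp [hg]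
    rw [Finset.sum_congr rfl fun S _ => hdecomp S, Finset.sum_sub_distrib]
    have h1 : p ^ (j*r) * n ^ (j+r) ≤ ∑ S : Fin j → V, ((nfin G S).card : ℝ) ^ r := htot
    nlinarith [hbad']
  have hgood' : (1 - β) * n ^ (j + r) * p ^ (j * r)
      ≤ ∑ S : Fin j → V,
          (if IsGood G α β p h i j S then (Nat.card (commNbhd G S) : ℝ) ^ r else 0) := by
    refine hgood.trans (le_of_eq (Finset.sum_congr rfl fun S _ => ?_))
    rw [hNrw S]
  refine ⟨hgood', ?_⟩
  by_cases hpz : p = 0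
  · refine ⟨fun _ => Classical.arbitrary V,
      allGood_of_p_zero G hr α β hα0.le hpz i hj1 _, ?_⟩
    rw [hpz, zero_pow (by omega : j ≠ 0), mul_zero, zero_mul]
    positivity
  · have hppos : 0 < p := lt_of_le_of_ne hp0 (Ne.symm hpz)
    set c : ℝ := (1 - β) * p ^ (j*r) * n ^ r with hc
    have hcpos : 0 < c := by rw [hc]; positivity
    have hconst : ∑ _S : Fin j → V, c
        ≤ ∑ S : Fin j → V,
            (if IsGood G α β p h i j S then ((nfin G S).card : ℝ) ^ r else 0) := by
      rw [Finset.sum_const, Finset.card_univ, nsmul_eq_mul]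
      have hcard : ((Fintype.card (Fin j → V) : ℕ) : ℝ) = n ^ j := by simp [hndef]
      rw [hcard]
      refine le_trans (le_of_eq ?_) hgood
      rw [hc, pow_add]
      ring
    obtain ⟨S, -, hS⟩ := Finset.exists_le_of_sum_le Finset.univ_nonempty hconst
    have hGood : IsGood G α β p h i j S := by
      by_contra hg
      rw [if_neg hg] at hS
      linarith
    rw [if_pos hGood] at hS
    refine ⟨S, hGood, ?_⟩
    have hb0 : (0:ℝ) ≤ (1 - β) ^ ((r:ℝ)⁻¹) * p ^ j * n := by positivity
    have hpow : ((1 - β) ^ ((r:ℝ)⁻¹) * p ^ j * n) ^ r = c := by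
      rw [hc, mul_pow, mul_pow, Real.rpow_inv_natCast_pow hβ2.le (by omega), ← pow_mul]
    refine le_of_pow_le_pow_left₀ (by omega : r ≠ 0) ?_ ?_
    · rw [hNrw S]; positivity
    · rw [hpow, hNrw S]
      exact hS
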